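/- Let k be a positive integer. Over the field F_{2^k}, the polynomial φ_{2^k}(x,y,z) factors as φ_{2^k}(x,y,z) = ∏_{α ∈ F_{2^k} \ F_2} (x + z + α(y+z)), the product running over all elements α of F_{2^k} other than 0 and 1. In particular, (x+y)·φ_{2^k}(x,y,z) = (x+z)^{2^k - 1} + (y+z)^{2^k - 1}. -/

import Mathlib

open Polynomial in
lemma my_prod_X_sub_C (K : Type*) [Field K] [Fintype K] [DecidableEq K] :
    ∏ a : K, (X - C a) = X ^ Fintype.card K - X := by
  have hm : (X ^ Fintype.card K - X : K[X]).Monic := by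
    apply monic_X_pow_sub
    simpa using Fintype.one_lt_card (α := K)
  have hd : (X ^ Fintype.card K - X : K[X]).natDegree = Fintype.card K :=
    FiniteField.X_pow_card_sub_X_natDegree_eq K Fintype.one_lt_card
  have h := prod_multiset_X_sub_C_of_monic_of_roots_card_eq hm
    (by rw [FiniteField.roots_X_pow_card_sub_X, hd]; simp [Finset.card_univ])
  rw [FiniteField.roots_X_pow_card_sub_X] at h
  exact h

lemma key_prod {E K : Type*} [Field E] [Fintype E] [DecidableEq E] [Field K]
    (ι : E →+* K) (U V : K) (hV : V ≠ 0) :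
    ∏ a : E, (U - ι a * V) =
      U ^ Fintype.card E - U * V ^ (Fintype.card E - 1) := by
  obtain ⟨m, hm⟩ : ∃ m, Fintype.card E = m + 1 :=
    ⟨Fintype.card E - 1, (Nat.sub_add_cancel Fintype.card_pos).symm⟩
  have h := congrArg (Polynomial.eval₂ ι (U / V)) (my_prod_X_sub_C E)
  rw [Polynomial.eval₂_finset_prod] at h
  simp only [Polynomial.eval₂_sub, Polynomial.eval₂_X, Polynomial.eval₂_C,
    Polynomial.eval₂_pow] at h
  calc ∏ a : E, (U - ι a * V) = ∏ a : E, V * (U / V - ι a) := by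
        refine Finset.prod_congr rfl fun a _ => ?_
        field_simp
    _ = V ^ Fintype.card E * ∏ a : E, (U / V - ι a) := by
        rw [Finset.prod_mul_distrib, Finset.prod_const, Finset.card_univ]
    _ = V ^ Fintype.card E * ((U / V) ^ Fintype.card E - U / V) := by rw [h]
    _ = U ^ Fintype.card E - U * V ^ (Fintype.card E - 1) := by
        rw [hm]; simp only [Nat.add_sub_cancel]
        have hVU : V * (U / V) = U := mul_div_cancel₀ U hV
        rw [mul_sub, ← mul_pow, hVU, pow_succ V m, mul_assoc, hVU]
        ring

/-- The denominator `(x+y)(x+z)(y+z)` as a polynomial in the variables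
`x = X 0`, `y = X 1`, `z = X 2`. -/
noncomputable def denom (F : Type*) [Field F] : MvPolynomial (Fin 3) F :=
  (MvPolynomial.X 0 + MvPolynomial.X 1) * (MvPolynomial.X 0 + MvPolynomial.X 2) *
    (MvPolynomial.X 1 + MvPolynomial.X 2)

/-- The numerator `x(f(y)+f(z)) + y(f(x)+f(z)) + z(f(x)+f(y))` of `Φ_f`;
`Φ_f` is the (exact) quotient of `numer F f` by `denom F`. -/
noncomputable def numer (F : Type*) [Field F] (f : Polynomial F) : MvPolynomial (Fin 3) F :=
  MvPolynomial.X 0 *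
      (Polynomial.aeval (MvPolynomial.X 1) f + Polynomial.aeval (MvPolynomial.X 2) f) +
    MvPolynomial.X 1 *
      (Polynomial.aeval (MvPolynomial.X 0) f + Polynomial.aeval (MvPolynomial.X 2) f) +
    MvPolynomial.X 2 *
      (Polynomial.aeval (MvPolynomial.X 0) f + Polynomial.aeval (MvPolynomial.X 1) f)

/-- The numerator `x(y^j+z^j) + y(x^j+z^j) + z(x^j+y^j)` of `φ_j`;
`φ_j` is the (exact) quotient of `numerMon F j` by `denom F`. -/
noncomputable def numerMon (F : Type*) [Field F] (j : ℕ) : MvPolynomial (Fin 3) F :=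
  MvPolynomial.X 0 * (MvPolynomial.X 1 ^ j + MvPolynomial.X 2 ^ j) +
    MvPolynomial.X 1 * (MvPolynomial.X 0 ^ j + MvPolynomial.X 2 ^ j) +
    MvPolynomial.X 2 * (MvPolynomial.X 0 ^ j + MvPolynomial.X 1 ^ j)

/-- A polynomial over `F` has an absolutely irreducible factor over `F` if it has a
nonconstant factor with coefficients in `F` that stays irreducible over the algebraic
closure of `F`. -/
def HasAbsIrredFactor (F : Type*) [Field F] (P : MvPolynomial (Fin 3) F) : Prop :=
  ∃ g : MvPolynomial (Fin 3) F, g ∣ P ∧ 0 < g.totalDegree ∧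
    Irreducible (MvPolynomial.map (algebraMap F (AlgebraicClosure F)) g)

open MvPolynomial

/-- Over the field `F_{2^k}`, the polynomial `φ_{2^k}` factors as the product of the
linear forms `x + z + α(y+z)` over all `α ∈ F_{2^k} \ F_2`; in particular
`(x+y) · φ_{2^k} = (x+z)^(2^k - 1) + (y+z)^(2^k - 1)`. -/
theorem phi_two_pow_factorisation (k : ℕ) (hk : 0 < k) (E : Type*) [Field E]
    [Fintype E] [DecidableEq E] (hcard : Fintype.card E = 2 ^ k)
    (φ : MvPolynomial (Fin 3) E) (hφ : denom E * φ = numerMon E (2 ^ k)) :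
    φ = ∏ α ∈ Finset.univ \ ({0, 1} : Finset E),
        (MvPolynomial.X 0 + MvPolynomial.X 2 +
          MvPolynomial.C α * (MvPolynomial.X 1 + MvPolynomial.X 2)) ∧
      (MvPolynomial.X 0 + MvPolynomial.X 1) * φ =
        (MvPolynomial.X 0 + MvPolynomial.X 2) ^ (2 ^ k - 1) +
          (MvPolynomial.X 1 + MvPolynomial.X 2) ^ (2 ^ k - 1) := by
  classical
  -- characteristic 2
  have hchar2 : ringChar E = 2 := by
    obtain ⟨n, hpprime, hcard'⟩ := FiniteField.card E (ringChar E)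
    have hdvd : ringChar E ∣ 2 ^ k := by
      rw [← hcard, hcard']
      exact dvd_pow_self _ n.2.ne'
    have := hpprime.dvd_of_dvd_pow (n := k) (by simpa using hdvd)
    exact (Nat.prime_dvd_prime_iff_eq hpprime Nat.prime_two).mp this
  haveI hE2 : CharP E 2 := hchar2 ▸ ringChar.charP E
  haveI : CharP (MvPolynomial (Fin 3) E) 2 := inferInstance
  haveI : Fact (Nat.Prime 2) := ⟨Nat.prime_two⟩
  obtain ⟨m, hm⟩ : ∃ m, 2 ^ k = m + 1 :=
    ⟨2 ^ k - 1, (Nat.sub_add_cancel Nat.one_le_two_pow).symm⟩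
  have hm1 : 2 ^ k - 1 = m := by omega
  have h2 : (2 : MvPolynomial (Fin 3) E) = 0 := by
    have := CharP.cast_eq_zero (MvPolynomial (Fin 3) E) 2
    exact_mod_cast this
  -- nonvanishing of the linear forms
  have hu : (X 0 + X 2 : MvPolynomial (Fin 3) E) ≠ 0 := fun h => by
    have := congrArg (MvPolynomial.eval ![1, 0, 0]) h
    simp at this
  have hv : (X 1 + X 2 : MvPolynomial (Fin 3) E) ≠ 0 := fun h => by
    have := congrArg (MvPolynomial.eval ![0, 1, 0]) h
    simp at this
  have hxy0 : (X 0 + X 1 : MvPolynomial (Fin 3) E) ≠ 0 := fun h => by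
    have := congrArg (MvPolynomial.eval ![1, 0, 0]) h
    simp at this
  have hdenom : denom E ≠ 0 := by
    rw [denom]
    exact mul_ne_zero (mul_ne_zero hxy0 hu) hv
  -- the full product over all of E
  have hfull : ∏ a : E, ((X 0 + X 2 : MvPolynomial (Fin 3) E) + C a * (X 1 + X 2))
      = (X 0 + X 2) ^ (2 ^ k) + (X 0 + X 2) * (X 1 + X 2) ^ (2 ^ k - 1) := by
    have inj := IsFractionRing.injective (MvPolynomial (Fin 3) E)
      (FractionRing (MvPolynomial (Fin 3) E))
    haveI : CharP (FractionRing (MvPolynomial (Fin 3) E)) 2 :=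
      charP_of_injective_ringHom inj 2
    set f := algebraMap (MvPolynomial (Fin 3) E)
      (FractionRing (MvPolynomial (Fin 3) E)) with hf
    apply inj
    have hVne : f (X 1 + X 2) ≠ 0 := (map_ne_zero_iff f inj).mpr hv
    have hkey := key_prod (f.comp (MvPolynomial.C : E →+* MvPolynomial (Fin 3) E))
      (f (X 0 + X 2)) (f (X 1 + X 2)) hVne
    rw [hcard] at hkey
    simp_rw [CharTwo.sub_eq_add] at hkey
    rw [map_prod]
    simp only [map_add, map_mul, map_pow, RingHom.comp_apply] at hkey ⊢
    exact hkey
  -- split off the factors at 0 and 1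
  set g : E → MvPolynomial (Fin 3) E := fun a => (X 0 + X 2 : MvPolynomial (Fin 3) E) + C a * (X 1 + X 2) with hg
  set A : MvPolynomial (Fin 3) E := ∏ a ∈ Finset.univ \ ({0, 1} : Finset E), g a with hA
  have hsplit : A * (g 0 * g 1) = ∏ a : E, g a := by
    rw [hA, ← Finset.prod_pair (zero_ne_one (α := E))]
    exact Finset.prod_sdiff (Finset.subset_univ _)
  have hg0 : g 0 = X 0 + X 2 := by simp [hg]
  have hg1 : g 1 = (X 0 + X 2) + (X 1 + X 2) := by simp [hg]
  have E1 : A * ((X 0 + X 2) * ((X 0 + X 2) + (X 1 + X 2)))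
      = (X 0 + X 2 : MvPolynomial (Fin 3) E) ^ (m + 1) + (X 0 + X 2) * (X 1 + X 2) ^ m := by
    rw [← hm, ← hm1]
    calc A * ((X 0 + X 2) * ((X 0 + X 2) + (X 1 + X 2)))
        = A * (g 0 * g 1) := by rw [hg0, hg1]
      _ = ∏ a : E, g a := hsplit
      _ = _ := hfull
  have hAuv : A * ((X 0 + X 2) + (X 1 + X 2))
      = (X 0 + X 2 : MvPolynomial (Fin 3) E) ^ m + (X 1 + X 2) ^ m := by
    apply mul_right_cancel₀ hu
    linear_combination E1
  -- Frobenius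
  have hf1 : (X 0 + X 2 : MvPolynomial (Fin 3) E) ^ (2 ^ k) = X 0 ^ (2 ^ k) + X 2 ^ (2 ^ k) :=
    add_pow_char_pow _ _ 2 k
  have hf2 : (X 1 + X 2 : MvPolynomial (Fin 3) E) ^ (2 ^ k) = X 1 ^ (2 ^ k) + X 2 ^ (2 ^ k) :=
    add_pow_char_pow _ _ 2 k
  have E2 : numerMon E (2 ^ k)
      = (X 0 + X 2 : MvPolynomial (Fin 3) E) ^ (2 ^ k) * (X 1 + X 2)
        + (X 0 + X 2) * (X 1 + X 2) ^ (2 ^ k) := by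
    rw [numerMon, hf1, hf2]
    generalize (X 0 : MvPolynomial (Fin 3) E) ^ (2 ^ k) = a
    generalize (X 1 : MvPolynomial (Fin 3) E) ^ (2 ^ k) = b
    generalize (X 2 : MvPolynomial (Fin 3) E) ^ (2 ^ k) = c
    linear_combination (-(c * (X 2 : MvPolynomial (Fin 3) E))) * h2
  have hxy : (X 0 + X 1 : MvPolynomial (Fin 3) E) = (X 0 + X 2) + (X 1 + X 2) := by
    linear_combination (-(X 2 : MvPolynomial (Fin 3) E)) * h2
  have E3 : denom E * A = numerMon E (2 ^ k) := by
    rw [E2, hm]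
    calc denom E * A
        = ((X 0 + X 2) * (X 1 + X 2)) * (A * ((X 0 + X 2) + (X 1 + X 2))) := by
          rw [denom, hxy]; ring
      _ = ((X 0 + X 2) * (X 1 + X 2)) * ((X 0 + X 2 : MvPolynomial (Fin 3) E) ^ m + (X 1 + X 2) ^ m) := by
          rw [hAuv]
      _ = _ := by ring
  have hφA : φ = A := mul_left_cancel₀ hdenom (by rw [hφ, E3])
  refine ⟨hφA, ?_⟩
  rw [hφA, hxy, hm1]
  linear_combination hAuv
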